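/- arXiv:2203.16728 — 2 statements merged into one kernel-verified Lean document; each statement's English description precedes it below -/
import Mathlib

section
/- If φ : 𝔻 → 𝔻 is an analytic self-map of the open unit disk that has a fixed point λ ∈ 𝔻 with |φ'(λ)| < 1, then for every z ∈ 𝔻 the sequence of iterates φ^[n](z) converges to λ. -/
open Metric Filter Topology Complex


noncomputable def mob (a z : ℂ) : ℂ := (z - a) / (1 - (starRingEnd ℂ) a * z)

lemma mob_normSq (a z : ℂ) :
    Complex.normSq (1 - (starRingEnd ℂ) a * z) - Complex.normSq (z - a)
      = (1 - Complex.normSq a) * (1 - Complex.normSq z) := by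
  simp [Complex.normSq_apply, Complex.sub_re, Complex.sub_im, Complex.mul_re, Complex.mul_im,
    Complex.conj_re, Complex.conj_im, Complex.one_re, Complex.one_im]
  ring

lemma mob_den_ne (a z : ℂ) (ha : ‖a‖ < 1) (hz : ‖z‖ < 1) :
    1 - (starRingEnd ℂ) a * z ≠ 0 := by
  have h : ‖(starRingEnd ℂ) a * z‖ < 1 := by
    rw [norm_mul, RCLike.norm_conj]
    nlinarith [norm_nonneg a, norm_nonneg z]
  intro h0
  rw [sub_eq_zero] at h0
  rw [← h0] at h
  simp at h

lemma my_normSq_eq_norm_sq (z : ℂ) : Complex.normSq z = ‖z‖ ^ 2 := by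
  rw [Complex.normSq_eq_norm_sq]

lemma mob_mem (a z : ℂ) (ha : ‖a‖ < 1) (hz : ‖z‖ < 1) : ‖mob a z‖ < 1 := by
  have hd := mob_den_ne a z ha hz
  rw [mob, norm_div, div_lt_one (norm_pos_iff.mpr hd)]
  have key := mob_normSq a z
  rw [my_normSq_eq_norm_sq, my_normSq_eq_norm_sq, my_normSq_eq_norm_sq, my_normSq_eq_norm_sq] at key
  have ha2 : ‖a‖ ^ 2 < 1 := by nlinarith [norm_nonneg a]
  have hz2 : ‖z‖ ^ 2 < 1 := by nlinarith [norm_nonneg z]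
  have h2 : ‖z - a‖ ^ 2 < ‖1 - (starRingEnd ℂ) a * z‖ ^ 2 := by
    nlinarith [mul_pos (sub_pos.mpr ha2) (sub_pos.mpr hz2)]
  exact lt_of_pow_lt_pow_left₀ 2 (norm_nonneg _) h2

lemma mob_inv (a z : ℂ) (ha : ‖a‖ < 1) (hz : ‖z‖ < 1) : mob (-a) (mob a z) = z := by
  have hd := mob_den_ne a z ha hz
  have hna : ‖a * (starRingEnd ℂ) a‖ < 1 := by
    rw [norm_mul, RCLike.norm_conj]; nlinarith [norm_nonneg a]
  have hne : (1 : ℂ) - a * (starRingEnd ℂ) a ≠ 0 := by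
    intro h; rw [sub_eq_zero] at h; rw [← h] at hna; simp at hna
  have hd2 : 1 - (starRingEnd ℂ) (-a) * mob a z
      = (1 - a * (starRingEnd ℂ) a) / (1 - (starRingEnd ℂ) a * z) := by
    rw [mob]
    have hd' : 1 - z * (starRingEnd ℂ) a ≠ 0 := by rwa [mul_comm]
    simp only [map_neg]
    field_simp
    ring
  rw [mob, hd2, mob]
  have hd' : 1 - z * (starRingEnd ℂ) a ≠ 0 := by rwa [mul_comm]
  field_simp
  ring

lemma mob_hasDerivAt (a z : ℂ) (hd : 1 - (starRingEnd ℂ) a * z ≠ 0) :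
    HasDerivAt (mob a)
      ((1 - (starRingEnd ℂ) a * a) / (1 - (starRingEnd ℂ) a * z) ^ 2) z := by
  have h1 : HasDerivAt (fun w : ℂ => w - a) 1 z := (hasDerivAt_id z).sub_const a
  have h2 : HasDerivAt (fun w : ℂ => 1 - (starRingEnd ℂ) a * w) (-(starRingEnd ℂ) a) z := by
    simpa using ((hasDerivAt_id z).const_mul ((starRingEnd ℂ) a)).const_sub 1
  have := h1.div h2 hd
  refine this.congr_deriv ?_
  ring

/-- If φ : 𝔻 → 𝔻 is analytic with a fixed point λ ∈ 𝔻 and |φ'(λ)| < 1, then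
the iterates φ^[n](z) converge to λ for every z ∈ 𝔻. -/
theorem iterates_tendsto_of_attracting_fixed_point
    (φ : ℂ → ℂ)
    (hφ : DifferentiableOn ℂ φ (ball (0:ℂ) 1))
    (hmaps : Set.MapsTo φ (ball (0:ℂ) 1) (ball (0:ℂ) 1))
    (lam : ℂ) (hlam : lam ∈ ball (0:ℂ) 1)
    (hfix : φ lam = lam)
    (hderiv : ‖deriv φ lam‖ < 1) :
    ∀ z ∈ ball (0:ℂ) 1, Tendsto (fun n => φ^[n] z) atTop (𝓝 lam) := by
  intro z hz
  have hla : ‖lam‖ < 1 := mem_ball_zero_iff.1 hlam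
  have hnla : ‖-lam‖ < 1 := by simpa using hla
  have hzn : ‖z‖ < 1 := mem_ball_zero_iff.1 hz
  have hmaps' : ∀ w, ‖w‖ < 1 → ‖φ w‖ < 1 := fun w hw =>
    mem_ball_zero_iff.1 (hmaps (mem_ball_zero_iff.2 hw))
  set h : ℂ → ℂ := fun w => mob lam (φ (mob (-lam) w)) with hdef
  have hm0 : mob (-lam) 0 = lam := by simp [mob]
  have hmlam : mob lam lam = 0 := by simp [mob]
  have hh : ∀ w, ‖w‖ < 1 → ‖h w‖ < 1 := fun w hw =>
    mob_mem _ _ hla (hmaps' _ (mob_mem _ _ hnla hw))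
  have h0 : h 0 = 0 := by rw [hdef]; simp only [hm0, hfix, hmlam]
  -- differentiability of h on the unit ball
  have d1 : DifferentiableOn ℂ (mob (-lam)) (ball (0:ℂ) 1) := fun w hw =>
    (mob_hasDerivAt (-lam) w (mob_den_ne _ _ hnla (mem_ball_zero_iff.1 hw))).differentiableAt.differentiableWithinAt
  have d2 : DifferentiableOn ℂ (mob lam) (ball (0:ℂ) 1) := fun w hw =>
    (mob_hasDerivAt lam w (mob_den_ne _ _ hla (mem_ball_zero_iff.1 hw))).differentiableAt.differentiableWithinAt
  have mt1 : Set.MapsTo (mob (-lam)) (ball (0:ℂ) 1) (ball (0:ℂ) 1) := fun w hw =>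
    mem_ball_zero_iff.2 (mob_mem _ _ hnla (mem_ball_zero_iff.1 hw))
  have mtφ : Set.MapsTo (fun w => φ (mob (-lam) w)) (ball (0:ℂ) 1) (ball (0:ℂ) 1) :=
    fun w hw => hmaps (mt1 hw)
  have hdiff : DifferentiableOn ℂ h (ball (0:ℂ) 1) :=
    d2.comp (hφ.comp d1 mt1) mtφ
  have hmapsh : Set.MapsTo h (ball (0:ℂ) 1) (ball (0:ℂ) 1) := fun w hw =>
    mem_ball_zero_iff.2 (hh w (mem_ball_zero_iff.1 hw))
  -- derivative of h at 0 equals deriv φ lam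
  have hne : 1 - (starRingEnd ℂ) lam * lam ≠ 0 := mob_den_ne lam lam hla hla
  have hderivh : deriv h 0 = deriv φ lam := by
    have c1 : HasDerivAt (mob (-lam))
        ((1 - (starRingEnd ℂ) (-lam) * (-lam)) / (1 - (starRingEnd ℂ) (-lam) * 0) ^ 2) 0 :=
      mob_hasDerivAt (-lam) 0 (by simp)
    have c2 : HasDerivAt φ (deriv φ lam) lam :=
      (hφ.differentiableAt (isOpen_ball.mem_nhds hlam)).hasDerivAt
    have c2' : HasDerivAt φ (deriv φ lam) (mob (-lam) 0) := by rwa [hm0]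
    have c3 : HasDerivAt (mob lam)
        ((1 - (starRingEnd ℂ) lam * lam) / (1 - (starRingEnd ℂ) lam * lam) ^ 2)
        (φ (mob (-lam) 0)) := by
      rw [hm0, hfix]; exact mob_hasDerivAt lam lam hne
    have C := (c3.comp 0 (c2'.comp 0 c1))
    have : deriv h 0 = (1 - (starRingEnd ℂ) lam * lam) / (1 - (starRingEnd ℂ) lam * lam) ^ 2 *
        (deriv φ lam * ((1 - (starRingEnd ℂ) (-lam) * (-lam)) / (1 - (starRingEnd ℂ) (-lam) * 0) ^ 2)) :=
      C.deriv
    rw [this]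
    have e1 : (starRingEnd ℂ) (-lam) * (-lam) = (starRingEnd ℂ) lam * lam := by ring_nf; simp
    rw [e1]
    field_simp
    ring
  -- the dslope function k
  set k : ℂ → ℂ := dslope h 0 with kdef
  have kdiff : DifferentiableOn ℂ k (ball (0:ℂ) 1) :=
    (differentiableOn_dslope (isOpen_ball.mem_nhds (mem_ball_self one_pos))).2 hdiff
  have kbound : ∀ w ∈ ball (0:ℂ) 1, ‖k w‖ ≤ 1 := by
    intro w hw
    have := Complex.norm_dslope_le_div_of_mapsTo_ball hdiff (by rw [h0]; exact hmapsh.mono_right ball_subset_closedBall) hw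
    simpa using this
  have k0 : ‖k 0‖ < 1 := by
    rw [kdef, dslope_same, hderivh]; exact hderiv
  have kstrict : ∀ w ∈ ball (0:ℂ) 1, ‖k w‖ < 1 := by
    intro w hw
    rcases lt_or_eq_of_le (kbound w hw) with h' | h'
    · exact h'
    · exfalso
      have hmax : IsMaxOn (norm ∘ k) (ball (0:ℂ) 1) w := by
        intro y hy
        simp only [Function.comp_apply, Set.mem_setOf_eq, h']
        exact kbound y hy
      have := eqOn_of_isPreconnected_of_isMaxOn_norm (convex_ball (0:ℂ) 1).isPreconnected
        isOpen_ball kdiff hw hmax (mem_ball_self one_pos)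
      rw [this] at k0
      rw [← h'] at k0
      exact lt_irrefl _ k0
  -- set up the starting point and radius
  set w0 : ℂ := mob lam z with w0def
  have hw0 : ‖w0‖ < 1 := mob_mem lam z hla hzn
  set r : ℝ := (‖w0‖ + 1) / 2 with rdef
  have hw0r : ‖w0‖ ≤ r := by rw [rdef]; linarith
  have hr1 : r < 1 := by rw [rdef]; linarith
  have hr0 : 0 < r := by rw [rdef]; positivity
  have hsub : closedBall (0:ℂ) r ⊆ ball (0:ℂ) 1 := closedBall_subset_ball hr1
  -- max of ‖k‖ on the closed ball
  have kcont : ContinuousOn (fun x => ‖k x‖) (closedBall (0:ℂ) r) :=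
    (kdiff.continuousOn.mono hsub).norm
  obtain ⟨x0, hx0mem, hx0max⟩ := (isCompact_closedBall (0:ℂ) r).exists_isMaxOn
    ⟨0, mem_closedBall_self hr0.le⟩ kcont
  set c : ℝ := ‖k x0‖ with cdef
  have hc1 : c < 1 := kstrict x0 (hsub hx0mem)
  have hc0 : 0 ≤ c := norm_nonneg _
  have hcontr : ∀ x : ℂ, ‖x‖ ≤ r → ‖h x‖ ≤ c * ‖x‖ := by
    intro x hx
    rcases eq_or_ne x 0 with rfl | hne
    · simp [h0]
    · have hk : k x = h x / x := by
        rw [kdef, dslope_of_ne _ hne, slope_def_field, h0, sub_zero, sub_zero]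
      have : ‖h x‖ = ‖k x‖ * ‖x‖ := by
        rw [hk, norm_div, div_mul_cancel₀ _ (norm_ne_zero_iff.2 hne)]
      rw [this]
      have hxk : ‖k x‖ ≤ c := hx0max (mem_closedBall_zero_iff.2 hx)
      exact mul_le_mul_of_nonneg_right hxk (norm_nonneg _)
  -- iterate bound
  have hiter : ∀ n : ℕ, ‖h^[n] w0‖ ≤ c ^ n * ‖w0‖ := by
    intro n
    induction n with
    | zero => simp
    | succ n ih =>
      have hsmall : ‖h^[n] w0‖ ≤ r := by
        have : c ^ n ≤ 1 := pow_le_one₀ hc0 hc1.le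
        calc ‖h^[n] w0‖ ≤ c ^ n * ‖w0‖ := ih
          _ ≤ 1 * ‖w0‖ := by
            exact mul_le_mul_of_nonneg_right this (norm_nonneg _)
          _ = ‖w0‖ := one_mul _
          _ ≤ r := hw0r
      rw [Function.iterate_succ_apply']
      calc ‖h (h^[n] w0)‖ ≤ c * ‖h^[n] w0‖ := hcontr _ hsmall
        _ ≤ c * (c ^ n * ‖w0‖) := mul_le_mul_of_nonneg_left ih hc0
        _ = c ^ (n + 1) * ‖w0‖ := by ring
  have tendsto0 : Tendsto (fun n => h^[n] w0) atTop (𝓝 (0:ℂ)) := by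
    apply squeeze_zero_norm hiter
    have := (tendsto_pow_atTop_nhds_zero_of_lt_one hc0 hc1).mul_const ‖w0‖
    simpa using this
  -- orbit identity
  have horbit : ∀ n : ℕ, ‖h^[n] w0‖ < 1 ∧ φ^[n] z = mob (-lam) (h^[n] w0) := by
    intro n
    induction n with
    | zero => exact ⟨hw0, (mob_inv lam z hla hzn).symm⟩
    | succ n ih =>
      obtain ⟨hu, heq⟩ := ih
      constructor
      · rw [Function.iterate_succ_apply']
        exact hh _ hu
      · rw [Function.iterate_succ_apply', Function.iterate_succ_apply', heq]
        rw [hdef]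
        simp only
        rw [mob_inv lam _ hla (hmaps' _ (mob_mem _ _ hnla hu))]
  -- conclude
  have hcont : ContinuousAt (mob (-lam)) 0 :=
    (mob_hasDerivAt (-lam) 0 (by simp)).differentiableAt.continuousAt
  have final : Tendsto (fun n => mob (-lam) (h^[n] w0)) atTop (𝓝 (mob (-lam) 0)) :=
    (hcont.tendsto).comp tendsto0
  rw [hm0] at final
  refine final.congr fun n => ?_
  exact ((horbit n).2).symm
end

section
/- Let f(λ) = β + ∫_{(0,∞)} (1+t²)/(t(t−λ)) dσ(t) on Ω = ℂ \ [0,∞), with β ≥ 0 and σ a finite nonzero positive measure with ∫(1/t)dσ < ∞, and set η(λ) = λ f(λ). If (wₙ) ⊂ Ω tends to 0 with arguments arg wₙ converging in (0, 2π), then η(wₙ) → 0. -/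
open MeasureTheory Complex Set Filter Topology

/-- The argument of `w` chosen continuously on the slit plane ℂ \ [0,∞), with values
in (0, 2π). -/
noncomputable def argSlit (w : ℂ) : ℝ :=
  if 0 < Complex.arg w then Complex.arg w else Complex.arg w + 2 * Real.pi

lemma cos_argSlit (z : ℂ) : Real.cos (argSlit z) = Real.cos (Complex.arg z) := by
  unfold argSlit
  split
  · rfl
  · rw [Real.cos_add_two_pi]

lemma key_dist (κ : ℝ) (hκ0 : 0 ≤ κ) (hκ1 : κ ≤ 1) (z : ℂ)
    (hre : z.re ≤ κ * ‖z‖) (t : ℝ) (ht : 0 ≤ t) :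
    Real.sqrt ((1 - κ)/2) * (t + ‖z‖) ≤ ‖(t:ℂ) - z‖ := by
  set s := Real.sqrt ((1 - κ)/2) with hs
  set a := ‖z‖ with ha
  have ha0 : 0 ≤ a := norm_nonneg z
  have hs2 : s^2 = (1-κ)/2 := Real.sq_sqrt (by linarith)
  have habs : (‖(t:ℂ)-z‖)^2 = (t - z.re)^2 + z.im^2 := by
    rw [Complex.sq_norm, Complex.normSq_apply]
    simp
    ring
  have ha2 : z.re^2 + z.im^2 = a^2 := by
    rw [ha, Complex.sq_norm, Complex.normSq_apply]; ring
  have hexp : (s*(t+a))^2 = (1-κ)/2*(t+a)^2 := by rw [mul_pow, hs2]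
  have h2 : (s*(t+a))^2 ≤ (‖(t:ℂ)-z‖)^2 := by
    rw [habs, hexp]
    nlinarith [mul_le_mul_of_nonneg_left hre ht, sq_nonneg (t - a),
      mul_nonneg (by linarith : (0:ℝ) ≤ 1+κ) (sq_nonneg (t - a))]
  calc s*(t+a) = Real.sqrt ((s*(t+a))^2) :=
        (Real.sqrt_sq (mul_nonneg (Real.sqrt_nonneg _) (by linarith))).symm
    _ ≤ Real.sqrt ((‖(t:ℂ)-z‖)^2) := Real.sqrt_le_sqrt h2
    _ = _ := Real.sqrt_sq (norm_nonneg _)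

/-- If f(λ) = β + ∫_{(0,∞)} (1+t²)/(t(t−λ)) dσ(t) on Ω = ℂ \ [0,∞) with β ≥ 0 and σ a
finite nonzero positive measure on (0,∞) with ∫ 1/t dσ < ∞, η(λ) = λ f(λ), and
wₙ ∈ Ω tends to 0 with arguments converging in (0,2π), then η(wₙ) → 0. -/
theorem eta_transform_tendsto_zero
    (f : ℂ → ℂ) (β : ℝ) (hβ : 0 ≤ β)
    (σ : Measure ℝ) [IsFiniteMeasure σ] (hσ : σ ≠ 0)
    (hsupp : σ (Iic (0:ℝ)) = 0)
    (hσint : Integrable (fun t : ℝ => 1 / t) σ)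
    (hf : ∀ lam : ℂ, ¬(lam.im = 0 ∧ 0 ≤ lam.re) →
      f lam = β + ∫ t, ((1:ℂ) + (t:ℂ)^2) / ((t:ℂ) * ((t:ℂ) - lam)) ∂σ)
    (hint : ∀ lam : ℂ, ¬(lam.im = 0 ∧ 0 ≤ lam.re) →
      Integrable (fun t : ℝ => ((1:ℂ) + (t:ℂ)^2) / ((t:ℂ) * ((t:ℂ) - lam))) σ)
    (w : ℕ → ℂ) (hw : ∀ n, ¬((w n).im = 0 ∧ 0 ≤ (w n).re))
    (hw0 : Tendsto w atTop (𝓝 0))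
    (θ : ℝ) (hθ : 0 < θ ∧ θ < 2 * Real.pi)
    (harg : Tendsto (fun n => argSlit (w n)) atTop (𝓝 θ)) :
    Tendsto (fun n => w n * f (w n)) atTop (𝓝 0) := by
  obtain ⟨hθ0, hθ2⟩ := hθ
  have hne : ∀ n, w n ≠ 0 := by
    intro n h
    exact hw n (by simp [h])
  -- cos θ < 1
  have hcosθ : Real.cos θ < 1 := by
    rcases lt_or_eq_of_le (Real.cos_le_one θ) with h | h
    · exact h
    · exfalso
      have := (Real.cos_eq_one_iff_of_lt_of_lt (by linarith) hθ2).mp h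
      linarith
  set κ : ℝ := (1 + Real.cos θ) / 2 with hκdef
  have hκ0 : 0 ≤ κ := by
    have := Real.neg_one_le_cos θ
    simp only [hκdef]; linarith
  have hκ1 : κ < 1 := by simp only [hκdef]; linarith
  set m : ℝ := Real.sqrt ((1 - κ)/2) with hmdef
  have hm : 0 < m := Real.sqrt_pos.mpr (by linarith)
  -- eventually cos (argSlit (w n)) ≤ κ
  have hcosev : ∀ᶠ n in atTop, Real.cos (argSlit (w n)) ≤ κ := by
    have h1 : Tendsto (fun n => Real.cos (argSlit (w n))) atTop (𝓝 (Real.cos θ)) :=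
      (Real.continuous_cos.continuousAt.tendsto).comp harg
    have h2 : Real.cos θ < κ := by simp only [hκdef]; linarith
    exact (h1.eventually_lt_const h2).mono fun n hn => le_of_lt hn
  have habsev : ∀ᶠ n in atTop, ‖w n‖ ≤ 1 := by
    have h1 : Tendsto (fun n => ‖w n‖) atTop (𝓝 0) := by
      simpa using hw0.norm
    exact (h1.eventually_lt_const one_pos).mono fun n hn => le_of_lt hn
  -- a.e. positivity
  have hae : ∀ᵐ t ∂σ, 0 < t := by
    have h1 : (Iic (0:ℝ))ᶜ ∈ ae σ := compl_mem_ae_iff.mpr hsupp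
    filter_upwards [h1] with t ht
    simpa using ht
  -- the integrand sequence
  set F : ℕ → ℝ → ℂ := fun n t =>
    w n * (((1:ℂ) + (t:ℂ)^2) / ((t:ℂ) * ((t:ℂ) - w n))) with hFdef
  -- dominated convergence
  have hbound_int : Integrable (fun t : ℝ => (1/m) * (1/t + 1)) σ :=
    (hσint.add (integrable_const 1)).const_mul (1/m)
  have hmeas : ∀ᶠ n in atTop, AEStronglyMeasurable (F n) σ :=
    Eventually.of_forall fun n =>
      ((hint (w n) (hw n)).aestronglyMeasurable).const_mul (w n)
  have hbound : ∀ᶠ n in atTop, ∀ᵐ t ∂σ, ‖F n t‖ ≤ (1/m) * (1/t + 1) := by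
    filter_upwards [hcosev, habsev] with n hcos habs1
    filter_upwards [hae] with t ht
    set a : ℝ := ‖w n‖ with hadef
    have ha0 : 0 < a := norm_pos_iff.mpr (hne n)
    -- re bound
    have hre : (w n).re ≤ κ * a := by
      have hc : Real.cos (Complex.arg (w n)) = (w n).re / a :=
        Complex.cos_arg (hne n)
      have := hcos
      rw [cos_argSlit, hc] at this
      calc (w n).re = ((w n).re / a) * a := by field_simp
        _ ≤ κ * a := mul_le_mul_of_nonneg_right this (le_of_lt ha0)
    have hd : m * (t + a) ≤ ‖(t:ℂ) - w n‖ :=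
      key_dist κ hκ0 (le_of_lt hκ1) (w n) hre t (le_of_lt ht)
    set d : ℝ := ‖(t:ℂ) - w n‖ with hddef
    have hd0 : 0 < d := lt_of_lt_of_le (by positivity) hd
    have hnorm : ‖F n t‖ = a * ((1 + t^2) / (t * d)) := by
      have h1 : ((1:ℂ) + (t:ℂ)^2) = ((1 + t^2 : ℝ) : ℂ) := by push_cast; ring
      simp only [hFdef, h1, norm_mul, norm_div, Complex.norm_real,
        Real.norm_eq_abs]
      rw [_root_.abs_of_nonneg (by positivity : (0:ℝ) ≤ 1 + t^2), _root_.abs_of_pos ht]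
    rw [hnorm]
    have step1 : a * ((1 + t^2) / (t * d)) ≤ a * ((1 + t^2) / (t * (m * (t + a)))) := by
      gcongr
    have step2 : a * ((1 + t^2) / (t * (m * (t + a)))) ≤ (1/m) * (1/t + 1) := by
      have heq : (1/m) * (1/t + 1) = ((1 + t) * (t + a)) / (t * (m * (t + a))) := by
        field_simp
      have hnum : a * (1 + t^2) ≤ (1 + t) * (t + a) := by
        nlinarith [mul_le_mul_of_nonneg_left habs1 (sq_nonneg t)]
      rw [← mul_div_assoc, heq, div_le_div_iff₀ (by positivity) (by positivity)]
      exact mul_le_mul_of_nonneg_right hnum (by positivity)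
    exact le_trans step1 step2
  have hlim : ∀ᵐ t ∂σ, Tendsto (fun n => F n t) atTop (𝓝 0) := by
    filter_upwards [hae] with t ht
    have ht0 : ((t:ℂ)) ≠ 0 := by
      simp only [ne_eq, Complex.ofReal_eq_zero]
      exact ne_of_gt ht
    have hden : Tendsto (fun n => (t:ℂ) * ((t:ℂ) - w n)) atTop (𝓝 ((t:ℂ) * ((t:ℂ) - 0))) :=
      tendsto_const_nhds.mul (tendsto_const_nhds.sub hw0)
    have hden' : Tendsto (fun n => (t:ℂ) * ((t:ℂ) - w n)) atTop (𝓝 ((t:ℂ) * (t:ℂ))) := by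
      simpa using hden
    have hquot : Tendsto (fun n => ((1:ℂ) + (t:ℂ)^2) / ((t:ℂ) * ((t:ℂ) - w n))) atTop
        (𝓝 (((1:ℂ) + (t:ℂ)^2) / ((t:ℂ) * (t:ℂ)))) :=
      tendsto_const_nhds.div hden' (mul_ne_zero ht0 ht0)
    have := hw0.mul hquot
    simpa [hFdef] using this
  have hint_tendsto : Tendsto (fun n => ∫ t, F n t ∂σ) atTop (𝓝 (∫ _ : ℝ, (0:ℂ) ∂σ)) :=
    tendsto_integral_filter_of_dominated_convergence _ hmeas hbound hbound_int hlim
  have hint_tendsto0 : Tendsto (fun n => ∫ t, F n t ∂σ) atTop (𝓝 0) := by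
    simpa using hint_tendsto
  have hβt : Tendsto (fun n => w n * (β:ℂ)) atTop (𝓝 0) := by
    simpa using hw0.mul_const (β:ℂ)
  have heq : ∀ n, w n * f (w n) = w n * (β:ℂ) + ∫ t, F n t ∂σ := by
    intro n
    rw [hf (w n) (hw n), mul_add]
    congr 1
    rw [← integral_const_mul]
  have := hβt.add hint_tendsto0
  simp only [add_zero] at this
  exact Tendsto.congr (fun n => (heq n).symm) this
end
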